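/- arXiv:2511.17626 — 7 statements merged into one kernel-verified Lean document; each statement's English description precedes it below -/
import Mathlib

section
/- Theorem 1, inequality (9): Suppose the full primal P has optimal value R* and strong duality holds for the full LP, i.e., there exists α* ∈ ℝ^p feasible for D with −bᵀα* = R*. Let I ⊆ {1,…,p} and let (μ₁, μ₂, ν) be an optimal solution of the primal subproblem P_I with optimal value R^k = −(τ−λ)ᵀμ₁ + (τ+λ)ᵀμ₂ + ν. Let ε̂₁ ≥ 0 be an upper bound on the largest violation of the full set of constraints, i.e., F(μ₁−μ₂) − ν·1 ⪯ b + ε̂₁·1. Then R* − ε̂₁ ≤ R^k ≤ R*. -/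
/-- Theorem 1, inequality (9): if the full primal `P` has optimal value `Rstar`
attained by `(μ1s, μ2s, νs)` and strong duality holds (dual feasible `αstar` with
value `Rstar`), and `(μ1, μ2, ν)` is an optimal solution of the subproblem `P_I`
with value `Rk` whose largest violation of the full constraint set is at most
`ε1 ≥ 0`, then `Rstar - ε1 ≤ Rk ≤ Rstar`. -/
theorem mrc_constraint_generation_sandwich
    (p m : ℕ) (hp : 0 < p) (hm : 0 < m)
    (F : Fin p → Fin m → ℝ) (b : Fin p → ℝ) (τ lam : Fin m → ℝ)
    (hlam : ∀ j, 0 ≤ lam j)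
    (Rstar Rk ε1 : ℝ) (hε1 : 0 ≤ ε1)
    -- optimal solution of the full primal P with value Rstar
    (μ1s μ2s : Fin m → ℝ) (νs : ℝ)
    (h1s : ∀ j, 0 ≤ μ1s j) (h2s : ∀ j, 0 ≤ μ2s j)
    (hfeass : ∀ i, (∑ j, F i j * (μ1s j - μ2s j)) - νs ≤ b i)
    (hvals : -(∑ j, (τ j - lam j) * μ1s j) + (∑ j, (τ j + lam j) * μ2s j) + νs = Rstar)
    (hmins : ∀ (μ1 μ2 : Fin m → ℝ) (ν : ℝ), (∀ j, 0 ≤ μ1 j) → (∀ j, 0 ≤ μ2 j) →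
      (∀ i, (∑ j, F i j * (μ1 j - μ2 j)) - ν ≤ b i) →
      Rstar ≤ -(∑ j, (τ j - lam j) * μ1 j) + (∑ j, (τ j + lam j) * μ2 j) + ν)
    -- strong duality: dual feasible point with value Rstar
    (αstar : Fin p → ℝ) (hαnn : ∀ i, 0 ≤ αstar i) (hαsum : ∑ i, αstar i = 1)
    (hαfeas : ∀ j, τ j - lam j ≤ ∑ i, αstar i * F i j ∧
      ∑ i, αstar i * F i j ≤ τ j + lam j)
    (hαval : -(∑ i, b i * αstar i) = Rstar)
    -- optimal solution of the subproblem P_I with value Rk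
    (I : Finset (Fin p)) (μ1 μ2 : Fin m → ℝ) (ν : ℝ)
    (h1 : ∀ j, 0 ≤ μ1 j) (h2 : ∀ j, 0 ≤ μ2 j)
    (hIfeas : ∀ i ∈ I, (∑ j, F i j * (μ1 j - μ2 j)) - ν ≤ b i)
    (hRk : -(∑ j, (τ j - lam j) * μ1 j) + (∑ j, (τ j + lam j) * μ2 j) + ν = Rk)
    (hImin : ∀ (μ1' μ2' : Fin m → ℝ) (ν' : ℝ), (∀ j, 0 ≤ μ1' j) → (∀ j, 0 ≤ μ2' j) →
      (∀ i ∈ I, (∑ j, F i j * (μ1' j - μ2' j)) - ν' ≤ b i) →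
      Rk ≤ -(∑ j, (τ j - lam j) * μ1' j) + (∑ j, (τ j + lam j) * μ2' j) + ν')
    -- largest violation of the full constraint set is at most ε1
    (hviol : ∀ i, (∑ j, F i j * (μ1 j - μ2 j)) - ν ≤ b i + ε1) :
    Rstar - ε1 ≤ Rk ∧ Rk ≤ Rstar := by
  constructor
  · have h := hmins μ1 μ2 (ν + ε1) h1 h2 (fun i => by linarith [hviol i])
    linarith
  · have h := hImin μ1s μ2s νs h1s h2s (fun i _ => hfeass i)
    linarith
end

section
/- Theorem 2 (two-sided bound for the combined constraint- and column-generation algorithm): Suppose strong duality holds for the full LP, i.e., there exist μ* ∈ ℝ^m and ν* ∈ ℝ such that (μ₁*, μ₂*, ν*) with μ₁* = (μ*)₊ and μ₂* = (−μ*)₊ is an optimal solution of the full primal P with optimal value R*, and there exists α* feasible for the full dual D with −bᵀα* = R*. Suppose at iteration k there is a primal–dual pair of the subproblem with common value R^k: vectors μ₁^k, μ₂^k ⪰ 0 in ℝ^m, ν^k ∈ ℝ, and α^k ∈ ℝ^p with α^k ⪰ 0 and 1ᵀα^k = 1, such that R^k = −(τ−λ)ᵀμ₁^k + (τ+λ)ᵀμ₂^k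 + ν^k = −bᵀα^k. Let ε̂₁ ≥ 0 be such that F(μ₁^k−μ₂^k) − ν^k·1 ⪯ b + ε̂₁·1 (largest primal constraint violation) and ε̂₂ ≥ 0 be such that |Fᵀα^k − τ| ⪯ λ + ε̂₂·1 (largest dual constraint violation). Then R* − ε̂₁ ≤ R^k ≤ R* + ε̂₂·‖μ*‖₁. -/
/-- Theorem 2 (two-sided bound for the combined constraint- and column-generation
algorithm): under strong duality of the full LP with optimal value `Rstar`
attained by `μ1* = (μstar)₊`, `μ2* = (-μstar)₊`, `νstar`, and a primal–dual
subproblem pair with common value `Rk`, if the largest primal and dual constraint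
violations are at most `ε1` and `ε2`, then
`Rstar - ε1 ≤ Rk ≤ Rstar + ε2 · ‖μstar‖₁`. -/
theorem mrc_combined_generation_sandwich
    (p m : ℕ) (hp : 0 < p) (hm : 0 < m)
    (F : Fin p → Fin m → ℝ) (b : Fin p → ℝ) (τ lam : Fin m → ℝ)
    (hlam : ∀ j, 0 ≤ lam j)
    (Rstar Rk ε1 ε2 : ℝ) (hε1 : 0 ≤ ε1) (hε2 : 0 ≤ ε2)
    -- optimal solution of the full primal P given by positive parts of μstar
    (μstar : Fin m → ℝ) (νstar : ℝ)
    (hfeass : ∀ i, (∑ j, F i j * (max (μstar j) 0 - max (-μstar j) 0)) - νstar ≤ b i)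
    (hvals : -(∑ j, (τ j - lam j) * max (μstar j) 0)
      + (∑ j, (τ j + lam j) * max (-μstar j) 0) + νstar = Rstar)
    (hmins : ∀ (μ1 μ2 : Fin m → ℝ) (ν : ℝ), (∀ j, 0 ≤ μ1 j) → (∀ j, 0 ≤ μ2 j) →
      (∀ i, (∑ j, F i j * (μ1 j - μ2 j)) - ν ≤ b i) →
      Rstar ≤ -(∑ j, (τ j - lam j) * μ1 j) + (∑ j, (τ j + lam j) * μ2 j) + ν)
    -- strong duality: dual feasible point with value Rstar
    (αstar : Fin p → ℝ) (hαsnn : ∀ i, 0 ≤ αstar i) (hαssum : ∑ i, αstar i = 1)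
    (hαsfeas : ∀ j, τ j - lam j ≤ ∑ i, αstar i * F i j ∧
      ∑ i, αstar i * F i j ≤ τ j + lam j)
    (hαsval : -(∑ i, b i * αstar i) = Rstar)
    -- primal–dual subproblem pair at iteration k with common value Rk
    (μ1k μ2k : Fin m → ℝ) (νk : ℝ)
    (h1k : ∀ j, 0 ≤ μ1k j) (h2k : ∀ j, 0 ≤ μ2k j)
    (αk : Fin p → ℝ) (hαknn : ∀ i, 0 ≤ αk i) (hαksum : ∑ i, αk i = 1)
    (hRkp : Rk = -(∑ j, (τ j - lam j) * μ1k j) + (∑ j, (τ j + lam j) * μ2k j) + νk)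
    (hRkd : Rk = -(∑ i, b i * αk i))
    -- largest primal constraint violation is at most ε1
    (hviol1 : ∀ i, (∑ j, F i j * (μ1k j - μ2k j)) - νk ≤ b i + ε1)
    -- largest dual constraint violation is at most ε2
    (hviol2 : ∀ j, |(∑ i, αk i * F i j) - τ j| ≤ lam j + ε2) :
    Rstar - ε1 ≤ Rk ∧ Rk ≤ Rstar + ε2 * ∑ j, |μstar j| := by
  constructor
  · have h := hmins μ1k μ2k (νk + ε1) h1k h2k (fun i => by linarith [hviol1 i])
    linarith [h, hRkp.symm]
  · set m1 : Fin m → ℝ := fun j => max (μstar j) 0 with hm1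
    set m2 : Fin m → ℝ := fun j => max (-μstar j) 0 with hm2
    have step1 : ∑ i, αk i * ((∑ j, F i j * (m1 j - m2 j)) - νstar) ≤ ∑ i, b i * αk i := by
      calc ∑ i, αk i * ((∑ j, F i j * (m1 j - m2 j)) - νstar)
          ≤ ∑ i, αk i * b i :=
            Finset.sum_le_sum fun i _ => mul_le_mul_of_nonneg_left (hfeass i) (hαknn i)
        _ = ∑ i, b i * αk i := by simp [mul_comm]
    have step2 : ∑ i, αk i * ((∑ j, F i j * (m1 j - m2 j)) - νstar)
        = (∑ j, (∑ i, αk i * F i j) * (m1 j - m2 j)) - νstar := by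
      have : ∑ i, αk i * ((∑ j, F i j * (m1 j - m2 j)) - νstar)
          = (∑ i, ∑ j, αk i * F i j * (m1 j - m2 j)) - (∑ i, αk i) * νstar := by
        simp only [mul_sub, Finset.mul_sum, Finset.sum_sub_distrib, Finset.sum_mul, mul_assoc]
      rw [this, hαksum, one_mul, Finset.sum_comm]
      congr 1
      refine Finset.sum_congr rfl fun j _ => ?_
      rw [Finset.sum_mul]
    have step3 : ∀ j, -((∑ i, αk i * F i j) * (m1 j - m2 j))
        ≤ -((τ j - lam j) * m1 j) + (τ j + lam j) * m2 j + ε2 * |μstar j| := by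
      intro j
      have habs := abs_le.mp (hviol2 j)
      have hm1n : (0:ℝ) ≤ m1 j := le_max_right _ _
      have hm2n : (0:ℝ) ≤ m2 j := le_max_right _ _
      have hsum : m1 j + m2 j = |μstar j| := by
        simp only [hm1, hm2]
        rcases le_total (μstar j) 0 with h | h
        · rw [abs_of_nonpos h, max_eq_right h, max_eq_left (by linarith)]; ring
        · rw [abs_of_nonneg h, max_eq_left h, max_eq_right (by linarith)]; ring
      nlinarith [mul_le_mul_of_nonneg_left habs.1 hm1n,
        mul_le_mul_of_nonneg_left habs.2 hm2n]
    have step4 : -(∑ j, (∑ i, αk i * F i j) * (m1 j - m2 j))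
        ≤ -(∑ j, (τ j - lam j) * m1 j) + (∑ j, (τ j + lam j) * m2 j)
          + ε2 * ∑ j, |μstar j| := by
      rw [← Finset.sum_neg_distrib]
      calc ∑ j, -((∑ i, αk i * F i j) * (m1 j - m2 j))
          ≤ ∑ j, (-((τ j - lam j) * m1 j) + (τ j + lam j) * m2 j + ε2 * |μstar j|) :=
            Finset.sum_le_sum fun j _ => step3 j
        _ = -(∑ j, (τ j - lam j) * m1 j) + (∑ j, (τ j + lam j) * m2 j)
            + ε2 * ∑ j, |μstar j| := by
            rw [Finset.sum_add_distrib, Finset.sum_add_distrib, Finset.sum_neg_distrib,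
              ← Finset.mul_sum]
    have : Rk ≤ -((∑ j, (∑ i, αk i * F i j) * (m1 j - m2 j)) - νstar) := by
      rw [hRkd]; linarith [step1, step2]
    linarith [step4, hvals]
end

section
/- Correctness of the greedy subset maximization (Algorithm 2): The maximum of ψ(C) = ((Σ_{y∈C} v(y)) − 1)/|C| over all nonempty subsets C ⊆ Y equals the maximum over prefix sets of the sorted values; that is, max over nonempty C ⊆ Y of ((Σ_{y∈C} v(y)) − 1)/|C| = max over k ∈ {1,…,N} of ((Σ_{i=1}^k a_i) − 1)/k. -/
lemma fin_strictMono_le_apply {k N : ℕ} {f : Fin k → Fin N} (hf : StrictMono f) :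
    ∀ j : Fin k, (j : ℕ) ≤ (f j : ℕ) := by
  have H : ∀ n : ℕ, ∀ hn : n < k, n ≤ (f ⟨n, hn⟩ : ℕ) := by
    intro n
    induction n with
    | zero => intro _; exact Nat.zero_le _
    | succ m ih =>
      intro hn
      have hm : m < k := by omega
      have h1 := ih hm
      have h2 : f ⟨m, hm⟩ < f ⟨m + 1, hn⟩ := hf (by simp [Fin.lt_def])
      rw [Fin.lt_def] at h2
      omega
  intro j
  have := H j.1 j.2
  simpa using this

lemma sum_subset_le_prefix {N : ℕ} (a : Fin N → ℝ)
    (hsorted : ∀ i j : Fin N, i ≤ j → a j ≤ a i)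
    (s : Finset (Fin N)) (k : Fin N) (hcard : s.card = (k : ℕ) + 1) :
    ∑ i ∈ s, a i ≤ ∑ i ∈ Finset.Iic k, a i := by
  have hc2 : (Finset.Iic k).card = (k : ℕ) + 1 := by rw [Fin.card_Iic]
  have hsum : ∀ (t : Finset (Fin N)) (h : t.card = (k : ℕ) + 1),
      ∑ i ∈ t, a i = ∑ j : Fin ((k : ℕ) + 1), a (t.orderEmbOfFin h j) := by
    intro t h
    refine (Finset.sum_bij (fun j _ => t.orderEmbOfFin h j) ?_ ?_ ?_ ?_).symm
    · intro j _; exact t.orderEmbOfFin_mem h j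
    · intro i _ j _ hij; exact (t.orderEmbOfFin h).injective hij
    · intro i hi
      have : i ∈ Set.range (t.orderEmbOfFin h) := by
        rw [Finset.range_orderEmbOfFin]; exact hi
      obtain ⟨j, hj⟩ := this
      exact ⟨j, Finset.mem_univ j, hj⟩
    · intro j _; rfl
  rw [hsum s hcard, hsum (Finset.Iic k) hc2]
  -- the order embedding of Iic k is castLE
  have hcast : ∀ j : Fin ((k : ℕ) + 1),
      (Finset.Iic k).orderEmbOfFin hc2 j = Fin.castLE k.isLt j := by
    have := Finset.orderEmbOfFin_unique (f := fun j : Fin ((k : ℕ) + 1) => Fin.castLE k.isLt j)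
      hc2 (fun j => by
        simp only [Finset.mem_Iic, Fin.le_def, Fin.coe_castLE]
        omega)
      (fun i j hij => by
        simp only [Fin.lt_def, Fin.coe_castLE]
        exact hij)
    intro j; exact (congrFun this j).symm
  apply Finset.sum_le_sum
  intro j _
  rw [hcast j]
  apply hsorted
  rw [Fin.le_def]
  simpa using fin_strictMono_le_apply (s.orderEmbOfFin hcard).strictMono j

/-- Correctness of the greedy subset maximization (Algorithm 2): the maximum of
`ψ(C) = ((∑_{y∈C} v y) - 1)/|C|` over nonempty subsets `C ⊆ Y` equals the maximum
over prefix sets of the values sorted in nonincreasing order. -/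
theorem greedy_subset_maximization_correct
    (Y : Type*) [Fintype Y] [Nonempty Y] (v : Y → ℝ)
    (N : ℕ) (e : Fin N ≃ Y)
    (a : Fin N → ℝ) (ha : ∀ i, a i = v (e i))
    (hsorted : ∀ i j : Fin N, i ≤ j → a j ≤ a i) :
    sSup {r : ℝ | ∃ C : Finset Y, C.Nonempty ∧
        r = ((∑ y ∈ C, v y) - 1) / (C.card : ℝ)} =
      sSup {r : ℝ | ∃ k : Fin N,
        r = ((∑ i ∈ Finset.Iic k, a i) - 1) / ((k : ℕ) + 1 : ℝ)} := by
  classical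
  have hN0 : 0 < N := by
    obtain ⟨y⟩ := ‹Nonempty Y›
    exact (e.symm y).pos
  have hNcard : Fintype.card Y = N := by
    rw [← Fintype.card_fin N]; exact (Fintype.card_congr e).symm
  set S1 : Set ℝ := {r : ℝ | ∃ C : Finset Y, C.Nonempty ∧
      r = ((∑ y ∈ C, v y) - 1) / (C.card : ℝ)} with hS1
  set S2 : Set ℝ := {r : ℝ | ∃ k : Fin N,
      r = ((∑ i ∈ Finset.Iic k, a i) - 1) / ((k : ℕ) + 1 : ℝ)} with hS2
  have hS1fin : S1.Finite := by
    apply (Set.finite_range (fun C : Finset Y => ((∑ y ∈ C, v y) - 1) / (C.card : ℝ))).subset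
    rintro r ⟨C, _, rfl⟩; exact ⟨C, rfl⟩
  have hS2fin : S2.Finite := by
    apply (Set.finite_range (fun k : Fin N =>
      ((∑ i ∈ Finset.Iic k, a i) - 1) / ((k : ℕ) + 1 : ℝ))).subset
    rintro r ⟨k, rfl⟩; exact ⟨k, rfl⟩
  have hS1ne : S1.Nonempty := ⟨_, ⟨Finset.univ, Finset.univ_nonempty, rfl⟩⟩
  have hS2ne : S2.Nonempty := ⟨_, ⟨⟨0, hN0⟩, rfl⟩⟩
  apply le_antisymm
  · apply csSup_le hS1ne
    rintro r ⟨C, hCne, rfl⟩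
    have hCcard : 0 < C.card := Finset.card_pos.mpr hCne
    have hCle : C.card ≤ N := hNcard ▸ Finset.card_le_univ C
    set k : Fin N := ⟨C.card - 1, by omega⟩ with hk
    have hk1 : (k : ℕ) + 1 = C.card := by simp [hk]; omega
    -- translate C to a finset of Fin N
    set s : Finset (Fin N) := C.image e.symm with hs
    have hscard : s.card = (k : ℕ) + 1 := by
      rw [hs, Finset.card_image_of_injective _ e.symm.injective, hk1]
    have hsumeq : ∑ y ∈ C, v y = ∑ i ∈ s, a i := by
      rw [hs, Finset.sum_image (fun x _ y _ h => e.symm.injective h)]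
      apply Finset.sum_congr rfl
      intro y _; rw [ha]; simp
    have hle : ∑ y ∈ C, v y ≤ ∑ i ∈ Finset.Iic k, a i := by
      rw [hsumeq]; exact sum_subset_le_prefix a hsorted s k hscard
    have hmem : ((∑ i ∈ Finset.Iic k, a i) - 1) / ((k : ℕ) + 1 : ℝ) ∈ S2 := ⟨k, rfl⟩
    refine le_trans ?_ (le_csSup hS2fin.bddAbove hmem)
    have hden : ((k : ℕ) + 1 : ℝ) = (C.card : ℝ) := by exact_mod_cast hk1
    have hpos : (0 : ℝ) < (k : ℕ) + 1 := by positivity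
    rw [← hden]
    exact (div_le_div_iff_of_pos_right hpos).mpr (by linarith)
  · apply csSup_le hS2ne
    rintro r ⟨k, rfl⟩
    have hmem : ((∑ i ∈ Finset.Iic k, a i) - 1) / ((k : ℕ) + 1 : ℝ) ∈ S1 := by
      refine ⟨(Finset.Iic k).image e, ⟨e k, Finset.mem_image_of_mem e (Finset.mem_Iic.mpr le_rfl)⟩, ?_⟩
      rw [Finset.card_image_of_injective _ e.injective, Fin.card_Iic,
        Finset.sum_image (fun x _ y _ h => e.injective h)]
      congr 1
      · congr 1
        apply Finset.sum_congr rfl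
        intro i _; rw [ha]
      · push_cast; ring
    exact le_csSup hS1fin.bddAbove hmem
end

section
/- Unimodality of the prefix values and validity of the greedy stopping rule (Algorithm 2): Define ψ_k = ((Σ_{i=1}^k a_i) − 1)/k for 1 ≤ k ≤ N. Then (i) for each k < N, ψ_{k+1} ≥ ψ_k if and only if a_{k+1} ≥ ψ_k; and (ii) if ψ_{k+1} < ψ_k for some k < N, then ψ_{j+1} < ψ_j for every j with k ≤ j < N. Consequently, max over 1 ≤ k ≤ N of ψ_k is attained at the first index k* such that either k* = N or ψ_{k*+1} < ψ_{k*}, so the greedy procedure that adds labels in nonincreasing order of a_i and stops as soon as adding the next label does not increase ψ attains the maximum of ψ_k over all k. -/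
/-- Unimodality of the prefix values and validity of the greedy stopping rule
(Algorithm 2): with `ψ_k = ((∑_{i=1}^k a_i) - 1)/k` for a nonincreasing sequence
`a_1 ≥ ⋯ ≥ a_N`:
(i) for `k < N`, `ψ_{k+1} ≥ ψ_k ↔ a_{k+1} ≥ ψ_k`;
(ii) if `ψ_{k+1} < ψ_k` then `ψ_{j+1} < ψ_j` for all `k ≤ j < N`;
(iii) consequently the maximum of `ψ_k` over `1 ≤ k ≤ N` is attained at the first
index `kstar` such that `kstar = N` or `ψ_{kstar+1} < ψ_{kstar}`. -/
theorem greedy_prefix_unimodal_stopping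
    (N : ℕ) (hN : 1 ≤ N) (a : ℕ → ℝ)
    (hsorted : ∀ i j, 1 ≤ i → i ≤ j → j ≤ N → a j ≤ a i)
    (ψ : ℕ → ℝ)
    (hψ : ∀ k, ψ k = ((∑ i ∈ Finset.Icc 1 k, a i) - 1) / (k : ℝ)) :
    (∀ k, 1 ≤ k → k < N → (ψ k ≤ ψ (k + 1) ↔ ψ k ≤ a (k + 1))) ∧
    (∀ k, 1 ≤ k → k < N → ψ (k + 1) < ψ k →
      ∀ j, k ≤ j → j < N → ψ (j + 1) < ψ j) ∧
    (∀ kstar, 1 ≤ kstar → kstar ≤ N →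
      (kstar = N ∨ ψ (kstar + 1) < ψ kstar) →
      (∀ j, 1 ≤ j → j < kstar → ψ j ≤ ψ (j + 1)) →
      ∀ k, 1 ≤ k → k ≤ N → ψ k ≤ ψ kstar) := by
  -- key identity
  have hstep : ∀ k : ℕ, 1 ≤ k → ((k : ℝ) + 1) * (ψ (k + 1) - ψ k) = a (k + 1) - ψ k := by
    intro k hk
    have hk0 : (k : ℝ) ≠ 0 := by positivity
    have hk1 : (k : ℝ) + 1 ≠ 0 := by positivity
    have hsum : (∑ i ∈ Finset.Icc 1 (k + 1), a i) = (∑ i ∈ Finset.Icc 1 k, a i) + a (k + 1) :=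
      Finset.sum_Icc_succ_top (by omega) a
    rw [hψ (k+1), hψ k, hsum]
    push_cast
    field_simp
    ring
  -- part (i)
  have part1 : ∀ k, 1 ≤ k → k < N → (ψ k ≤ ψ (k + 1) ↔ ψ k ≤ a (k + 1)) := by
    intro k hk _
    have h := hstep k hk
    have hkpos : (0:ℝ) < (k : ℝ) + 1 := by positivity
    constructor
    · intro hle; nlinarith
    · intro hle; nlinarith
  -- strengthened part (ii)
  have part2' : ∀ k, 1 ≤ k → k < N → ψ (k + 1) < ψ k →
      ∀ j, k ≤ j → j < N → ψ (j + 1) < ψ j ∧ a (j + 1) < ψ (j + 1) := by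
    intro k hk hkN hdec
    intro j hkj
    induction j, hkj using Nat.le_induction with
    | base =>
      intro _
      refine ⟨hdec, ?_⟩
      have h := hstep k hk
      have hk1 : (1:ℝ) ≤ (k:ℝ) := by exact_mod_cast hk
      nlinarith
    | succ j hkj ih =>
      intro hjN
      have hjN' : j < N := by omega
      obtain ⟨h1, h2⟩ := ih hjN'
      have ha : a (j + 2) ≤ a (j + 1) := hsorted (j + 1) (j + 2) (by omega) (by omega) (by omega)
      have h := hstep (j + 1) (by omega)
      have hj0 : (0:ℝ) ≤ (j:ℝ) := Nat.cast_nonneg j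
      push_cast at h
      constructor
      · nlinarith
      · nlinarith
  have part2 : ∀ k, 1 ≤ k → k < N → ψ (k + 1) < ψ k →
      ∀ j, k ≤ j → j < N → ψ (j + 1) < ψ j := by
    intro k hk hkN hdec j hkj hjN
    exact (part2' k hk hkN hdec j hkj hjN).1
  refine ⟨part1, part2, ?_⟩
  intro kstar hk1 hkN hstop hmono k hk hkN'
  rcases le_or_gt k kstar with hle | hlt
  · -- increasing up to kstar: show ψ k ≤ ψ j for all k ≤ j ≤ kstar
    have : ∀ j, k ≤ j → j ≤ kstar → ψ k ≤ ψ j := by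
      intro j hkj
      induction j, hkj using Nat.le_induction with
      | base => intro _; exact le_refl _
      | succ j hkj ih =>
        intro hjk
        have h1 : ψ k ≤ ψ j := ih (by omega)
        have h2 : ψ j ≤ ψ (j + 1) := hmono j (by omega) (by omega)
        linarith
    exact this kstar hle (le_refl _)
  · -- beyond kstar: decreasing
    have hkstarN : kstar < N := by omega
    have hdec : ψ (kstar + 1) < ψ kstar := by
      rcases hstop with h | h
      · omega
      · exact h
    have : ∀ j, kstar ≤ j → j ≤ N → ψ j ≤ ψ kstar := by
      intro j hkj
      induction j, hkj using Nat.le_induction with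
      | base => intro _; exact le_refl _
      | succ j hkj ih =>
        intro hjN
        have h1 : ψ j ≤ ψ kstar := ih (by omega)
        have h2 : ψ (j + 1) < ψ j := part2 kstar hk1 hkstarN hdec j hkj (by omega)
        linarith
    exact this k (by omega) hkN'
end

section
/- Equality of optimal values of the MRC convex problem and its LP formulation: The infimum over μ ∈ ℝ^m of 1 − τᵀμ + φ(μ) + λᵀ|μ|, where φ(μ) = max over i ∈ {1,…,n} and nonempty subsets C ⊆ Y of ((Σ_{y∈C} Φ(x_i,y)ᵀμ) − 1)/|C|, equals the optimal value of the linear program P: minimize −(τ−λ)ᵀμ₁ + (τ+λ)ᵀμ₂ + ν over μ₁, μ₂ ∈ ℝ^m with μ₁, μ₂ ⪰ 0 and ν ∈ ℝ, subject to F(μ₁−μ₂) − ν·1 ⪯ b. -/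
private lemma mrc_sInf_eq_of (A B : Set ℝ) (hA : A.Nonempty)
    (hAB : A ⊆ B) (h : ∀ b ∈ B, ∃ a ∈ A, a ≤ b) : sInf A = sInf B := by
  have hB : B.Nonempty := hA.mono hAB
  by_cases hbd : BddBelow A
  · obtain ⟨c, hc⟩ := hbd
    have hbdB : BddBelow B := ⟨c, fun b hb => by
      obtain ⟨a, ha, hab⟩ := h b hb
      exact (hc ha).trans hab⟩
    apply le_antisymm
    · exact le_csInf hB (fun b hb => by
        obtain ⟨a, ha, hab⟩ := h b hb
        exact (csInf_le ⟨c, hc⟩ ha).trans hab)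
    · exact le_csInf hA (fun a ha => csInf_le hbdB (hAB ha))
  · have hbdB : ¬ BddBelow B := fun hb => hbd (hb.mono hAB)
    rw [Real.sInf_of_not_bddBelow hbd, Real.sInf_of_not_bddBelow hbdB]

private lemma mrc_max_sub (a : ℝ) : max a 0 - max (-a) 0 = a := by
  rcases le_total a 0 with h | h
  · rw [max_eq_right h, max_eq_left (neg_nonneg.2 h)]; ring
  · rw [max_eq_left h, max_eq_right (neg_nonpos.2 h)]; ring

private lemma mrc_max_add (a : ℝ) : max a 0 + max (-a) 0 = |a| := by
  rcases le_total a 0 with h | h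
  · rw [max_eq_right h, max_eq_left (neg_nonneg.2 h), abs_of_nonpos h]; ring
  · rw [max_eq_left h, max_eq_right (neg_nonpos.2 h), abs_of_nonneg h]; ring

/-- Equality of optimal values of the MRC convex problem and its LP formulation:
the infimum over `μ` of `1 - τᵀμ + φ(μ) + λᵀ|μ|`, where `φ(μ)` is the maximum over
samples `i` and nonempty subsets `C ⊆ Y` of `((∑_{y∈C} Φ(x_i,y)ᵀμ) - 1)/|C|`,
equals the optimal value of the linear program `P`. -/
theorem mrc_lp_formulation_optimal_values_eq
    (m n : ℕ) (hn : 0 < n)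
    (Y : Type*) [Fintype Y] [Nonempty Y]
    (X : Type*) (Φ : X → Y → Fin m → ℝ) (x : Fin n → X)
    (τ lam : Fin m → ℝ) (hlam : ∀ j, 0 ≤ lam j) :
    sInf {r : ℝ | ∃ μ : Fin m → ℝ,
        r = 1 - (∑ j, τ j * μ j)
          + sSup {s : ℝ | ∃ i : Fin n, ∃ C : Finset Y, C.Nonempty ∧
              s = ((∑ y ∈ C, ∑ j, Φ (x i) y j * μ j) - 1) / (C.card : ℝ)}
          + ∑ j, lam j * |μ j|} =
      sInf {r : ℝ | ∃ μ1 μ2 : Fin m → ℝ, ∃ ν : ℝ,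
        (∀ j, 0 ≤ μ1 j) ∧ (∀ j, 0 ≤ μ2 j) ∧
        (∀ i : Fin n, ∀ C : Finset Y, C.Nonempty →
          ((1 : ℝ) / (C.card : ℝ)) * (∑ y ∈ C, ∑ j, Φ (x i) y j * (μ1 j - μ2 j)) - ν
            ≤ 1 / (C.card : ℝ) - 1) ∧
        r = -(∑ j, (τ j - lam j) * μ1 j) + (∑ j, (τ j + lam j) * μ2 j) + ν} := by
  classical
  set S : (Fin m → ℝ) → Set ℝ := fun μ =>
    {s : ℝ | ∃ i : Fin n, ∃ C : Finset Y, C.Nonempty ∧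
        s = ((∑ y ∈ C, ∑ j, Φ (x i) y j * μ j) - 1) / (C.card : ℝ)} with hS
  have hSne : ∀ μ, (S μ).Nonempty := by
    intro μ
    exact ⟨_, ⟨⟨0, hn⟩, {Classical.arbitrary Y}, Finset.singleton_nonempty _, rfl⟩⟩
  have hSbdd : ∀ μ, BddAbove (S μ) := by
    intro μ
    have hsub : S μ ⊆ Set.range (fun p : Fin n × Finset Y =>
        ((∑ y ∈ p.2, ∑ j, Φ (x p.1) y j * μ j) - 1) / (p.2.card : ℝ)) := by
      rintro s ⟨i, C, hC, rfl⟩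
      exact ⟨(i, C), rfl⟩
    exact BddAbove.mono hsub (Set.finite_range _).bddAbove
  apply mrc_sInf_eq_of
  · exact ⟨_, ⟨0, rfl⟩⟩
  · -- A ⊆ B
    rintro r ⟨μ, rfl⟩
    refine ⟨fun j => max (μ j) 0, fun j => max (-μ j) 0, sSup (S μ) + 1,
      fun j => le_max_right _ _, fun j => le_max_right _ _, ?_, ?_⟩
    · intro i C hC
      have hc : (0 : ℝ) < (C.card : ℝ) := by exact_mod_cast hC.card_pos
      have hmem : ((∑ y ∈ C, ∑ j, Φ (x i) y j * μ j) - 1) / (C.card : ℝ) ∈ S μ :=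
        ⟨i, C, hC, rfl⟩
      have hle := le_csSup (hSbdd μ) hmem
      have hsum : (∑ y ∈ C, ∑ j, Φ (x i) y j * (max (μ j) 0 - max (-μ j) 0))
          = ∑ y ∈ C, ∑ j, Φ (x i) y j * μ j := by
        apply Finset.sum_congr rfl
        intro y _
        apply Finset.sum_congr rfl
        intro j _
        rw [mrc_max_sub]
      rw [hsum]
      have hdiv : ((∑ y ∈ C, ∑ j, Φ (x i) y j * μ j) - 1) / (C.card : ℝ)
          = (1 / (C.card : ℝ)) * (∑ y ∈ C, ∑ j, Φ (x i) y j * μ j) - 1 / (C.card : ℝ) := by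
        field_simp
      linarith [hle, hdiv ▸ hle]
    · have h1 : -(∑ j, (τ j - lam j) * max (μ j) 0) + (∑ j, (τ j + lam j) * max (-μ j) 0)
          = -(∑ j, τ j * μ j) + ∑ j, lam j * |μ j| := by
        have : ∀ j : Fin m, -((τ j - lam j) * max (μ j) 0) + (τ j + lam j) * max (-μ j) 0
            = -(τ j * μ j) + lam j * |μ j| := by
          intro j
          have h2 := mrc_max_sub (μ j)
          have h3 := mrc_max_add (μ j)
          linear_combination (-(τ j)) * h2 + lam j * h3
        calc -(∑ j, (τ j - lam j) * max (μ j) 0) + (∑ j, (τ j + lam j) * max (-μ j) 0)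
            = ∑ j, (-((τ j - lam j) * max (μ j) 0) + (τ j + lam j) * max (-μ j) 0) := by
              rw [Finset.sum_add_distrib, ← Finset.sum_neg_distrib]
          _ = ∑ j, (-(τ j * μ j) + lam j * |μ j|) := Finset.sum_congr rfl (fun j _ => this j)
          _ = -(∑ j, τ j * μ j) + ∑ j, lam j * |μ j| := by
              rw [Finset.sum_add_distrib, Finset.sum_neg_distrib]
      linarith [h1]
  · -- ∀ b ∈ B, ∃ a ∈ A, a ≤ b
    rintro r ⟨μ1, μ2, ν, h1, h2, hcon, rfl⟩
    refine ⟨_, ⟨fun j => μ1 j - μ2 j, rfl⟩, ?_⟩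
    have hsup : sSup (S (fun j => μ1 j - μ2 j)) ≤ ν - 1 := by
      apply csSup_le (hSne _)
      rintro s ⟨i, C, hC, rfl⟩
      have hc : (0 : ℝ) < (C.card : ℝ) := by exact_mod_cast hC.card_pos
      have hco := hcon i C hC
      have hdiv : ((∑ y ∈ C, ∑ j, Φ (x i) y j * (μ1 j - μ2 j)) - 1) / (C.card : ℝ)
          = (1 / (C.card : ℝ)) * (∑ y ∈ C, ∑ j, Φ (x i) y j * (μ1 j - μ2 j))
            - 1 / (C.card : ℝ) := by
        field_simp
      rw [hdiv]
      linarith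
    have habs : (∑ j, lam j * |μ1 j - μ2 j|) ≤ ∑ j, lam j * (μ1 j + μ2 j) := by
      apply Finset.sum_le_sum
      intro j _
      apply mul_le_mul_of_nonneg_left _ (hlam j)
      calc |μ1 j - μ2 j| ≤ |μ1 j| + |μ2 j| := abs_sub _ _
        _ = μ1 j + μ2 j := by rw [abs_of_nonneg (h1 j), abs_of_nonneg (h2 j)]
    have hsum : -(∑ j, (τ j - lam j) * μ1 j) + (∑ j, (τ j + lam j) * μ2 j)
        = -(∑ j, τ j * (μ1 j - μ2 j)) + ∑ j, lam j * (μ1 j + μ2 j) := by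
      calc -(∑ j, (τ j - lam j) * μ1 j) + (∑ j, (τ j + lam j) * μ2 j)
          = ∑ j, (-((τ j - lam j) * μ1 j) + (τ j + lam j) * μ2 j) := by
            rw [Finset.sum_add_distrib, ← Finset.sum_neg_distrib]
        _ = ∑ j, (-(τ j * (μ1 j - μ2 j)) + lam j * (μ1 j + μ2 j)) :=
            Finset.sum_congr rfl (fun j _ => by ring)
        _ = -(∑ j, τ j * (μ1 j - μ2 j)) + ∑ j, lam j * (μ1 j + μ2 j) := by
            rw [Finset.sum_add_distrib, Finset.sum_neg_distrib]
    linarith [hsup, habs, hsum]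
end

section
/- Solution recovery for the MRC LP formulation: If (μ₁*, μ₂*, ν*) is an optimal solution of the linear program P (minimize −(τ−λ)ᵀμ₁ + (τ+λ)ᵀμ₂ + ν over μ₁, μ₂ ⪰ 0 and ν ∈ ℝ subject to F(μ₁−μ₂) − ν·1 ⪯ b), then μ* = μ₁* − μ₂* is a minimizer over ℝ^m of the MRC objective 1 − τᵀμ + φ(μ) + λᵀ|μ|, where φ(μ) = max over i ∈ {1,…,n} and nonempty subsets C ⊆ Y of ((Σ_{y∈C} Φ(x_i,y)ᵀμ) − 1)/|C|. -/
private lemma mrc_ineq_aux (c s v : ℝ) (hc : 0 < c) :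
    ((1 / c) * s - v ≤ 1 / c - 1) ↔ (s - 1) / c ≤ v - 1 := by
  have h1 : (1 / c) * c = 1 := one_div_mul_cancel hc.ne'
  rw [sub_le_iff_le_add, one_div_mul_eq_div, div_le_iff₀ hc, div_le_iff₀ hc]
  constructor <;> intro h <;> nlinarith [h1]

/-- Solution recovery for the MRC LP formulation: if `(μ1s, μ2s, νs)` is an optimal
solution of the linear program `P`, then `μ* = μ1s - μ2s` minimizes the MRC
objective `1 - τᵀμ + φ(μ) + λᵀ|μ|` over `μ ∈ ℝ^m`, where `φ(μ)` is the maximum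
over samples `i` and nonempty subsets `C ⊆ Y` of
`((∑_{y∈C} Φ(x_i,y)ᵀμ) - 1)/|C|`. -/
theorem mrc_lp_solution_recovery
    (m n : ℕ) (hn : 0 < n)
    (Y : Type*) [Fintype Y] [Nonempty Y]
    (X : Type*) (Φ : X → Y → Fin m → ℝ) (x : Fin n → X)
    (τ lam : Fin m → ℝ) (hlam : ∀ j, 0 ≤ lam j)
    (μ1s μ2s : Fin m → ℝ) (νs : ℝ)
    (h1s : ∀ j, 0 ≤ μ1s j) (h2s : ∀ j, 0 ≤ μ2s j)
    (hfeas : ∀ i : Fin n, ∀ C : Finset Y, C.Nonempty →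
      ((1 : ℝ) / (C.card : ℝ)) * (∑ y ∈ C, ∑ j, Φ (x i) y j * (μ1s j - μ2s j)) - νs
        ≤ 1 / (C.card : ℝ) - 1)
    (hopt : ∀ (μ1 μ2 : Fin m → ℝ) (ν : ℝ), (∀ j, 0 ≤ μ1 j) → (∀ j, 0 ≤ μ2 j) →
      (∀ i : Fin n, ∀ C : Finset Y, C.Nonempty →
        ((1 : ℝ) / (C.card : ℝ)) * (∑ y ∈ C, ∑ j, Φ (x i) y j * (μ1 j - μ2 j)) - ν
          ≤ 1 / (C.card : ℝ) - 1) →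
      -(∑ j, (τ j - lam j) * μ1s j) + (∑ j, (τ j + lam j) * μ2s j) + νs
        ≤ -(∑ j, (τ j - lam j) * μ1 j) + (∑ j, (τ j + lam j) * μ2 j) + ν) :
    ∀ μ : Fin m → ℝ,
      1 - (∑ j, τ j * (μ1s j - μ2s j))
        + sSup {s : ℝ | ∃ i : Fin n, ∃ C : Finset Y, C.Nonempty ∧
            s = ((∑ y ∈ C, ∑ j, Φ (x i) y j * (μ1s j - μ2s j)) - 1) / (C.card : ℝ)}
        + ∑ j, lam j * |μ1s j - μ2s j|
      ≤ 1 - (∑ j, τ j * μ j)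
        + sSup {s : ℝ | ∃ i : Fin n, ∃ C : Finset Y, C.Nonempty ∧
            s = ((∑ y ∈ C, ∑ j, Φ (x i) y j * μ j) - 1) / (C.card : ℝ)}
        + ∑ j, lam j * |μ j| := by

  intro μ
  -- abbreviation for the sup-set
  set S : (Fin m → ℝ) → Set ℝ := fun ν =>
    {s : ℝ | ∃ i : Fin n, ∃ C : Finset Y, C.Nonempty ∧
      s = ((∑ y ∈ C, ∑ j, Φ (x i) y j * ν j) - 1) / (C.card : ℝ)} with hS
  have hbdd : ∀ ν : Fin m → ℝ, BddAbove (S ν) := by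
    intro ν
    have hsub : S ν ⊆ Set.range (fun p : Fin n × Finset Y =>
        ((∑ y ∈ p.2, ∑ j, Φ (x p.1) y j * ν j) - 1) / (p.2.card : ℝ)) := by
      rintro s ⟨i, C, hC, rfl⟩
      exact ⟨(i, C), rfl⟩
    exact ((Set.finite_range _).subset hsub).bddAbove
  have hne : ∀ ν : Fin m → ℝ, (S ν).Nonempty := by
    intro ν
    exact ⟨_, ⟨⟨0, hn⟩, Finset.univ, Finset.univ_nonempty, rfl⟩⟩
  -- the sup at the optimal point is at most νs - 1
  have hsup_le : sSup (S (fun j => μ1s j - μ2s j)) ≤ νs - 1 := by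
    apply csSup_le (hne _)
    rintro s ⟨i, C, hC, rfl⟩
    have hc : (0 : ℝ) < (C.card : ℝ) := by exact_mod_cast hC.card_pos
    exact (mrc_ineq_aux _ _ _ hc).mp (hfeas i C hC)
  -- candidate solution for an arbitrary μ
  set a : Fin m → ℝ := fun j => max (μ j) 0 with ha
  set b : Fin m → ℝ := fun j => max (-μ j) 0 with hb
  have hab : ∀ j, a j - b j = μ j := by
    intro j
    rcases le_total (μ j) 0 with h | h
    · simp [ha, hb, max_eq_right h, max_eq_left (neg_nonneg.mpr h)]
    · simp [ha, hb, max_eq_left h, max_eq_right (neg_nonpos.mpr h)]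
  have habs : ∀ j, a j + b j = |μ j| := by
    intro j
    rcases le_total (μ j) 0 with h | h
    · simp [ha, hb, max_eq_right h, max_eq_left (neg_nonneg.mpr h), abs_of_nonpos h]
    · simp [ha, hb, max_eq_left h, max_eq_right (neg_nonpos.mpr h), abs_of_nonneg h]
  set ν' : ℝ := sSup (S μ) + 1 with hν'
  have hfeas' : ∀ i : Fin n, ∀ C : Finset Y, C.Nonempty →
      ((1 : ℝ) / (C.card : ℝ)) * (∑ y ∈ C, ∑ j, Φ (x i) y j * (a j - b j)) - ν'
        ≤ 1 / (C.card : ℝ) - 1 := by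
    intro i C hC
    have hc : (0 : ℝ) < (C.card : ℝ) := by exact_mod_cast hC.card_pos
    have hmem : ((∑ y ∈ C, ∑ j, Φ (x i) y j * μ j) - 1) / (C.card : ℝ) ∈ S μ :=
      ⟨i, C, hC, rfl⟩
    have hle := le_csSup (hbdd μ) hmem
    simp only [hab]
    refine (mrc_ineq_aux _ _ _ hc).mpr ?_
    have hν1 : ν' - 1 = sSup (S μ) := by rw [hν']; ring
    rw [hν1]
    exact hle
  have hLP := hopt a b ν' (fun j => le_max_right _ _) (fun j => le_max_right _ _) hfeas'
  -- rewrite the LP objectives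
  have sum_id : ∀ (u v : Fin m → ℝ),
      -(∑ j, (τ j - lam j) * u j) + (∑ j, (τ j + lam j) * v j)
      = -(∑ j, τ j * (u j - v j)) + ∑ j, lam j * (u j + v j) := by
    intro u v
    rw [neg_add_eq_sub, neg_add_eq_sub, ← Finset.sum_sub_distrib, ← Finset.sum_sub_distrib]
    exact Finset.sum_congr rfl fun j _ => by ring
  rw [sum_id, sum_id] at hLP
  have habs_le : ∑ j, lam j * |μ1s j - μ2s j| ≤ ∑ j, lam j * (μ1s j + μ2s j) := by
    apply Finset.sum_le_sum
    intro j _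
    apply mul_le_mul_of_nonneg_left _ (hlam j)
    rcases abs_cases (μ1s j - μ2s j) with ⟨h, _⟩ | ⟨h, _⟩ <;>
      [linarith [h2s j]; linarith [h1s j]]
  have hright : -(∑ j, τ j * (a j - b j)) + ∑ j, lam j * (a j + b j)
      = -(∑ j, τ j * μ j) + ∑ j, lam j * |μ j| := by
    congr 1
    · congr 1; exact Finset.sum_congr rfl fun j _ => by rw [hab]
    · exact Finset.sum_congr rfl fun j _ => by rw [habs]
  rw [hright] at hLP
  have h1 : 1 - (∑ j, τ j * (μ1s j - μ2s j)) + sSup (S (fun j => μ1s j - μ2s j))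
      + ∑ j, lam j * |μ1s j - μ2s j|
      ≤ -(∑ j, τ j * (μ1s j - μ2s j)) + ∑ j, lam j * (μ1s j + μ2s j) + νs := by
    linarith [hsup_le, habs_le]
  have h2 : -(∑ j, τ j * μ j) + ∑ j, lam j * |μ j| + ν'
      = 1 - (∑ j, τ j * μ j) + sSup (S μ) + ∑ j, lam j * |μ j| := by
    rw [hν']; ring
  calc 1 - (∑ j, τ j * (μ1s j - μ2s j)) + sSup (S (fun j => μ1s j - μ2s j))
        + ∑ j, lam j * |μ1s j - μ2s j|
      ≤ -(∑ j, τ j * (μ1s j - μ2s j)) + ∑ j, lam j * (μ1s j + μ2s j) + νs := h1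
    _ ≤ -(∑ j, τ j * μ j) + ∑ j, lam j * |μ j| + ν' := hLP
    _ = 1 - (∑ j, τ j * μ j) + sSup (S μ) + ∑ j, lam j * |μ j| := h2
end

section
/- Boundedness of the initial LP built from cluster centers: Let τ ∈ ℝ^{dK} with blocks τ^1,…,τ^K ∈ ℝ^d, let λ ∈ ℝ^{dK} with λ ⪰ 0, let w ∈ ℝ^K with w_i > 0 and Σ_{i=1}^K w_i = 1, set ẑ_i = τ^i / w_i, and let F̂, b̂ be the MRC LP data built from the K samples ẑ₁,…,ẑ_K: F̂ has one row for each pair (i, C) with i ∈ {1,…,K} and C a nonempty subset of {1,…,K}, given by (1/|C|)·Σ_{y∈C} Φ(ẑ_i, y)ᵀ, and b̂_{(i,C)} = 1/|C| − 1, where Φ is the one-hot feature embedding. Then the vector α placing weight w_i on the row (i, {i}) for each i and zero elsewhere is feasible for the corresponding dual LP — α ⪰ 0, 1ᵀα = 1, and τ−λ ⪯ F̂ᵀα ⪯ τ+λ — and therefore, by weak duality, every feasible point (μ₁, μ₂, ν) of the primal LP with data (F̂, b̂) (μ₁, μ₂ ⪰ 0, F̂(μ₁−μ₂) − ν·1 ⪯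 b̂) has objective value −(τ−λ)ᵀμ₁ + (τ+λ)ᵀμ₂ + ν ≥ −b̂ᵀα = 0; in particular the initial primal LP is bounded below. -/
/-- The one-hot feature embedding `Φ(z, i) ∈ ℝ^{dK}`, represented in `K` blocks of
size `d`: the `i`-th block equals `z` and the remaining blocks are zero. -/
def oneHotEmbed (d K : ℕ) (z : Fin d → ℝ) (i : Fin K) : Fin K → Fin d → ℝ :=
  fun k j => if k = i then z j else 0

/-- Boundedness of the initial LP built from cluster centers: the vector `α`
putting weight `w i` on the row `(i, {i})` is feasible for the dual of the LP with
data `(F̂, b̂)` built from the samples `ẑ_1, …, ẑ_K`, it has dual objective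
`-b̂ᵀα = 0`, and hence by weak duality every feasible point of the initial primal
LP has nonnegative objective value; in particular the initial LP is bounded
below. -/
theorem mrc_initial_lp_bounded
    (d K : ℕ) (hd : 0 < d) (hK : 0 < K)
    (τ lam : Fin K → Fin d → ℝ) (hlam : ∀ k j, 0 ≤ lam k j)
    (w : Fin K → ℝ) (hw : ∀ i, 0 < w i) (hwsum : ∑ i, w i = 1)
    (zhat : Fin K → Fin d → ℝ) (hz : ∀ i j, zhat i j = τ i j / w i)
    (Fhat : Fin K × {C : Finset (Fin K) // C.Nonempty} → Fin K → Fin d → ℝ)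
    (hF : ∀ i C k j, Fhat (i, C) k j
      = ((1 : ℝ) / (C.1.card : ℝ)) * ∑ y ∈ C.1, oneHotEmbed d K (zhat i) y k j)
    (bhat : Fin K × {C : Finset (Fin K) // C.Nonempty} → ℝ)
    (hb : ∀ i C, bhat (i, C) = 1 / (C.1.card : ℝ) - 1)
    (α : Fin K × {C : Finset (Fin K) // C.Nonempty} → ℝ)
    (hα : ∀ i C, α (i, C) = if C.1 = {i} then w i else 0) :
    (∀ r, 0 ≤ α r) ∧
    (∑ r, α r = 1) ∧
    (∀ k j, τ k j - lam k j ≤ ∑ r, α r * Fhat r k j ∧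
      ∑ r, α r * Fhat r k j ≤ τ k j + lam k j) ∧
    (-(∑ r, bhat r * α r) = 0) ∧
    (∀ (μ1 μ2 : Fin K → Fin d → ℝ) (ν : ℝ),
      (∀ k j, 0 ≤ μ1 k j) → (∀ k j, 0 ≤ μ2 k j) →
      (∀ r, (∑ k, ∑ j, Fhat r k j * (μ1 k j - μ2 k j)) - ν ≤ bhat r) →
      0 ≤ -(∑ k, ∑ j, (τ k j - lam k j) * μ1 k j)
        + (∑ k, ∑ j, (τ k j + lam k j) * μ2 k j) + ν) := by
  -- abbreviation for the singleton subset
  set s1 : Fin K → {C : Finset (Fin K) // C.Nonempty} :=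
    fun i => ⟨{i}, Finset.singleton_nonempty i⟩ with hs1
  -- sums against α reduce to the diagonal
  have hsingle : ∀ (i : Fin K) (g : {C : Finset (Fin K) // C.Nonempty} → ℝ),
      ∑ C : {C : Finset (Fin K) // C.Nonempty}, α (i, C) * g C = w i * g (s1 i) := by
    intro i g
    rw [Fintype.sum_eq_single (s1 i)]
    · rw [hα]; simp [s1]
    · intro C hC
      have hne : C.1 ≠ {i} := fun h => hC (Subtype.ext h)
      rw [hα]; simp [hne]
  have hαnn : ∀ r, 0 ≤ α r := by
    rintro ⟨i, C⟩
    rw [hα]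
    split
    · exact (hw i).le
    · exact le_refl 0
  have hαsum : ∑ r, α r = 1 := by
    rw [Fintype.sum_prod_type]
    calc ∑ i, ∑ C : {C : Finset (Fin K) // C.Nonempty}, α (i, C)
        = ∑ i, ∑ C : {C : Finset (Fin K) // C.Nonempty}, α (i, C) * 1 := by simp
      _ = ∑ i, w i * 1 := by
          exact Finset.sum_congr rfl fun i _ => hsingle i (fun _ => 1)
      _ = 1 := by simpa using hwsum
  -- Fhat at the diagonal row
  have hFdiag : ∀ i k j, Fhat (i, s1 i) k j = if k = i then zhat i j else 0 := by
    intro i k j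
    rw [hF]
    simp [s1, oneHotEmbed]
  -- the dual combination equals τ
  have hS : ∀ k j, ∑ r, α r * Fhat r k j = τ k j := by
    intro k j
    rw [Fintype.sum_prod_type]
    calc ∑ i, ∑ C : {C : Finset (Fin K) // C.Nonempty}, α (i, C) * Fhat (i, C) k j
        = ∑ i, w i * Fhat (i, s1 i) k j := by
          exact Finset.sum_congr rfl fun i _ => hsingle i (fun C => Fhat (i, C) k j)
      _ = ∑ i, (if k = i then w i * zhat i j else 0) := by
          refine Finset.sum_congr rfl fun i _ => ?_
          rw [hFdiag]
          split <;> simp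
      _ = w k * zhat k j := by simp
      _ = τ k j := by
          rw [hz, mul_comm]; exact div_mul_cancel₀ _ (hw k).ne'
  have hfeas : ∀ k j, τ k j - lam k j ≤ ∑ r, α r * Fhat r k j ∧
      ∑ r, α r * Fhat r k j ≤ τ k j + lam k j := by
    intro k j
    rw [hS]
    constructor <;> linarith [hlam k j]
  have hbα : ∑ r, bhat r * α r = 0 := by
    rw [Fintype.sum_prod_type]
    calc ∑ i, ∑ C : {C : Finset (Fin K) // C.Nonempty}, bhat (i, C) * α (i, C)
        = ∑ i, ∑ C : {C : Finset (Fin K) // C.Nonempty}, α (i, C) * bhat (i, C) := by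
          simp [mul_comm]
      _ = ∑ i, w i * bhat (i, s1 i) := by
          exact Finset.sum_congr rfl fun i _ => hsingle i (fun C => bhat (i, C))
      _ = 0 := by
          refine Finset.sum_eq_zero fun i _ => ?_
          rw [hb]
          simp [s1]
  refine ⟨hαnn, hαsum, hfeas, by rw [hbα]; ring, ?_⟩
  intro μ1 μ2 ν hμ1 hμ2 hcon
  -- key: τ · (μ1 - μ2) ≤ ν
  have key : ∑ k, ∑ j, τ k j * (μ1 k j - μ2 k j) ≤ ν := by
    have swap : ∑ k, ∑ j, τ k j * (μ1 k j - μ2 k j)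
        = ∑ r, α r * (∑ k, ∑ j, Fhat r k j * (μ1 k j - μ2 k j)) := by
      calc ∑ k, ∑ j, τ k j * (μ1 k j - μ2 k j)
          = ∑ k, ∑ j, (∑ r, α r * Fhat r k j) * (μ1 k j - μ2 k j) := by
            refine Finset.sum_congr rfl fun k _ => Finset.sum_congr rfl fun j _ => ?_
            rw [hS]
        _ = ∑ k, ∑ j, ∑ r, α r * (Fhat r k j * (μ1 k j - μ2 k j)) := by
            simp_rw [Finset.sum_mul, mul_assoc]
        _ = ∑ k, ∑ r, ∑ j, α r * (Fhat r k j * (μ1 k j - μ2 k j)) :=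
            Finset.sum_congr rfl fun k _ => Finset.sum_comm
        _ = ∑ r, ∑ k, ∑ j, α r * (Fhat r k j * (μ1 k j - μ2 k j)) := Finset.sum_comm
        _ = ∑ r, α r * (∑ k, ∑ j, Fhat r k j * (μ1 k j - μ2 k j)) := by
            simp_rw [Finset.mul_sum]
    rw [swap]
    have hbound : ∀ r ∈ Finset.univ,
        α r * (∑ k, ∑ j, Fhat r k j * (μ1 k j - μ2 k j)) ≤ α r * (bhat r + ν) := by
      intro r _
      exact mul_le_mul_of_nonneg_left (by linarith [hcon r]) (hαnn r)
    calc ∑ r, α r * (∑ k, ∑ j, Fhat r k j * (μ1 k j - μ2 k j))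
        ≤ ∑ r, α r * (bhat r + ν) := Finset.sum_le_sum hbound
      _ = ∑ r, bhat r * α r + (∑ r, α r) * ν := by
          rw [Finset.sum_mul, ← Finset.sum_add_distrib]
          exact Finset.sum_congr rfl fun r _ => by ring
      _ = ν := by rw [hbα, hαsum]; ring
  have hsplit : -(∑ k, ∑ j, (τ k j - lam k j) * μ1 k j)
        + (∑ k, ∑ j, (τ k j + lam k j) * μ2 k j)
      = -(∑ k, ∑ j, τ k j * (μ1 k j - μ2 k j))
        + ∑ k, ∑ j, lam k j * (μ1 k j + μ2 k j) := by
    simp_rw [← Finset.sum_neg_distrib, ← Finset.sum_add_distrib]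
    refine Finset.sum_congr rfl fun k _ => Finset.sum_congr rfl fun j _ => ?_
    ring
  have hlampos : 0 ≤ ∑ k, ∑ j, lam k j * (μ1 k j + μ2 k j) := by
    refine Finset.sum_nonneg fun k _ => Finset.sum_nonneg fun j _ => ?_
    exact mul_nonneg (hlam k j) (by linarith [hμ1 k j, hμ2 k j])
  linarith [key, hsplit, hlampos]
end
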